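/- Let r ∈ ℝ with r³ ≠ 1 and r³ ≠ −2. On ℝ⁵ с coordinates (x,y,z,p,q), define x₁ = (3x−p)/4, y₁ = −(12^{2/3}/8)·y, z₁ = (z − xp + (3/2)x²)/4, p₁ = x, q₁ = −(12^{1/3}/6)·q, and define the linear functionals on tangent vectors v = (v_x,v_y,v_z,v_p,v_q): ω₂(v) = v_p + (2r³−5)v_x − 3r²v_y, ω₃(v) = v_q − 3r²v_x + 6r·v_y, ω₄(v) = v_y − r·v_x, ϖ(v) = v_z − p·v_x − q·v_y. Then at every point m and for every v: Dz₁(v) − p₁(m)Dx₁(v) − q₁(m)Dy₁(v) = (1/4)ϖ(v); Dp₁(v) − (2/(r³−1))Dx₁(v) + 12^{1/3}(r²/(r³−1))Dy₁(v) = (1/(2(r³−1)))ω₂(v); Dq₁(v) + 12^{1/3}(r²/(r³−1))Dx₁(v) + 12^{2/3}(r(r³−4)/(6(r³−1)))Dy₁(v) = −(12^{1/3}r²/(4(r³−1)))ω₂(v) − (12^{1/3}/6)ω₃(v); Dy₁(v) − (12^{2/3}r/(2(r³+2)))Dx₁(v) = (12^{2/3}r/(8(r³+2)))ω₂(v) +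 (12^{2/3}(r³−1)/(4(r³+2)))ω₄(v). -/

import Mathlib

noncomputable section

/-- Points (and tangent vectors) of `ℝ⁵`, coordinates `(x, y, z, p, q)`. -/
abbrev R5 : Type := ℝ × ℝ × ℝ × ℝ × ℝ

namespace Stmt12

/-- First component `x₁ = (3x − p)/4` of the coordinate diffeomorphism. -/
def x₁ (m : R5) : ℝ := (3 * m.1 - m.2.2.2.1) / 4
/-- Second component `y₁ = −(12^{2/3}/8)·y`. -/
def y₁ (m : R5) : ℝ := -((12 : ℝ) ^ ((2 : ℝ) / 3) / 8) * m.2.1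
/-- Third component `z₁ = (z − xp + (3/2)x²)/4`. -/
def z₁ (m : R5) : ℝ := (m.2.2.1 - m.1 * m.2.2.2.1 + 3 / 2 * m.1 ^ 2) / 4
/-- Fourth component `p₁ = x`. -/
def p₁ (m : R5) : ℝ := m.1
/-- Fifth component `q₁ = −(12^{1/3}/6)·q`. -/
def q₁ (m : R5) : ℝ := -((12 : ℝ) ^ ((1 : ℝ) / 3) / 6) * m.2.2.2.2

/-- The structural 1-form `ω₂ = dp + (2r³−5)dx − 3r²dy` evaluated on a tangent vector. -/
def ω₂ (r : ℝ) (v : R5) : ℝ := v.2.2.2.1 + (2 * r ^ 3 - 5) * v.1 - 3 * r ^ 2 * v.2.1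
/-- The structural 1-form `ω₃ = dq − 3r²dx + 6rdy` evaluated on a tangent vector. -/
def ω₃ (r : ℝ) (v : R5) : ℝ := v.2.2.2.2 - 3 * r ^ 2 * v.1 + 6 * r * v.2.1
/-- The structural 1-form `ω₄ = dy − rdx` evaluated on a tangent vector. -/
def ω₄ (r : ℝ) (v : R5) : ℝ := v.2.1 - r * v.1
/-- The contact form `ϖ = dz − pdx − qdy` evaluated at `m` on a tangent vector. -/
def ϖ (m v : R5) : ℝ := v.2.2.1 - m.2.2.2.1 * v.1 - m.2.2.2.2 * v.2.1

end Stmt12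

open Stmt12

section AuxFDeriv

lemma hX' (m : R5) : HasFDerivAt (fun m : R5 => m.1)
    (ContinuousLinearMap.fst ℝ ℝ (ℝ × ℝ × ℝ × ℝ)) m := hasFDerivAt_fst
lemma hY' (m : R5) : HasFDerivAt (fun m : R5 => m.2.1)
    ((ContinuousLinearMap.fst ℝ ℝ (ℝ × ℝ × ℝ)).comp
      (ContinuousLinearMap.snd ℝ ℝ (ℝ × ℝ × ℝ × ℝ))) m :=
  hasFDerivAt_fst.comp m hasFDerivAt_snd
lemma hZ' (m : R5) : HasFDerivAt (fun m : R5 => m.2.2.1)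
    ((ContinuousLinearMap.fst ℝ ℝ (ℝ × ℝ)).comp
      ((ContinuousLinearMap.snd ℝ ℝ (ℝ × ℝ × ℝ)).comp
        (ContinuousLinearMap.snd ℝ ℝ (ℝ × ℝ × ℝ × ℝ)))) m :=
  hasFDerivAt_fst.comp m (hasFDerivAt_snd.comp m hasFDerivAt_snd)
lemma hP' (m : R5) : HasFDerivAt (fun m : R5 => m.2.2.2.1)
    ((ContinuousLinearMap.fst ℝ ℝ ℝ).comp
      ((ContinuousLinearMap.snd ℝ ℝ (ℝ × ℝ)).comp
        ((ContinuousLinearMap.snd ℝ ℝ (ℝ × ℝ × ℝ)).comp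
          (ContinuousLinearMap.snd ℝ ℝ (ℝ × ℝ × ℝ × ℝ))))) m :=
  hasFDerivAt_fst.comp m (hasFDerivAt_snd.comp m (hasFDerivAt_snd.comp m hasFDerivAt_snd))
lemma hQ' (m : R5) : HasFDerivAt (fun m : R5 => m.2.2.2.2)
    ((ContinuousLinearMap.snd ℝ ℝ ℝ).comp
      ((ContinuousLinearMap.snd ℝ ℝ (ℝ × ℝ)).comp
        ((ContinuousLinearMap.snd ℝ ℝ (ℝ × ℝ × ℝ)).comp
          (ContinuousLinearMap.snd ℝ ℝ (ℝ × ℝ × ℝ × ℝ))))) m :=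
  hasFDerivAt_snd.comp m (hasFDerivAt_snd.comp m (hasFDerivAt_snd.comp m hasFDerivAt_snd))

lemma dx₁ (m v : R5) : fderiv ℝ x₁ m v = (3 * v.1 - v.2.2.2.1) / 4 := by
  have h0 := (((hX' m).const_mul (3:ℝ)).sub (hP' m)).mul_const ((4:ℝ)⁻¹)
  have h : HasFDerivAt x₁ _ m :=
    h0.congr_of_eventuallyEq (Filter.Eventually.of_forall fun x => by simp [x₁]; ring)
  rw [h.fderiv]; simp; ring

lemma dy₁ (m v : R5) : fderiv ℝ y₁ m v = -((12 : ℝ) ^ ((2 : ℝ) / 3) / 8) * v.2.1 := by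
  have h0 := (hY' m).const_mul (-((12 : ℝ) ^ ((2 : ℝ) / 3) / 8))
  have h : HasFDerivAt y₁ _ m :=
    h0.congr_of_eventuallyEq (Filter.Eventually.of_forall fun x => by simp [y₁])
  rw [h.fderiv]; simp

lemma dz₁ (m v : R5) :
    fderiv ℝ z₁ m v = (v.2.2.1 - (m.1 * v.2.2.2.1 + m.2.2.2.1 * v.1)
      + 3 * (m.1 * v.1)) / 4 := by
  have h0 := ((((hZ' m).sub ((hX' m).mul (hP' m))).add
    (((hX' m).mul (hX' m)).const_mul ((3:ℝ)/2))).mul_const ((4:ℝ)⁻¹))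
  have h : HasFDerivAt z₁ _ m :=
    h0.congr_of_eventuallyEq (Filter.Eventually.of_forall fun x => by simp [z₁]; ring)
  rw [h.fderiv]; simp; ring

lemma dp₁ (m v : R5) : fderiv ℝ p₁ m v = v.1 := by
  have h : HasFDerivAt p₁ _ m :=
    (hX' m).congr_of_eventuallyEq (Filter.Eventually.of_forall fun x => by simp [p₁])
  rw [h.fderiv]; simp

lemma dq₁ (m v : R5) : fderiv ℝ q₁ m v = -((12 : ℝ) ^ ((1 : ℝ) / 3) / 6) * v.2.2.2.2 := by
  have h0 := (hQ' m).const_mul (-((12 : ℝ) ^ ((1 : ℝ) / 3) / 6))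
  have h : HasFDerivAt q₁ _ m :=
    h0.congr_of_eventuallyEq (Filter.Eventually.of_forall fun x => by simp [q₁])
  rw [h.fderiv]; simp

lemma cube_root_twelve_cube : ((12 : ℝ) ^ ((1 : ℝ) / 3)) ^ 3 = 12 := by
  rw [← Real.rpow_natCast ((12 : ℝ) ^ ((1 : ℝ) / 3)) 3,
    ← Real.rpow_mul (by norm_num : (0:ℝ) ≤ 12)]
  norm_num

lemma twelve_two_thirds : (12 : ℝ) ^ ((2 : ℝ) / 3) = ((12 : ℝ) ^ ((1 : ℝ) / 3)) ^ 2 := by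
  rw [← Real.rpow_natCast ((12 : ℝ) ^ ((1 : ℝ) / 3)) 2,
    ← Real.rpow_mul (by norm_num : (0:ℝ) ≤ 12)]
  norm_num

end AuxFDeriv

/-- The pullback of the (translated) standard structural 1-forms under the coordinate
diffeomorphism `(x₁,y₁,z₁,p₁,q₁)` lies in the span of `ϖ, ω₂, ω₃, ω₄`, with the explicit
coefficients recovering the parametrized solution
`(12^{2/3}r/(2(r³+2)), 2·12^{1/3}r²/(r³+2))` of Noth's equation. -/
theorem recovering_noth_solution_one (r : ℝ) (hr1 : r ^ 3 ≠ 1) (hr2 : r ^ 3 ≠ -2) :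
    ∀ m v : R5,
      (fderiv ℝ z₁ m v - p₁ m * fderiv ℝ x₁ m v - q₁ m * fderiv ℝ y₁ m v
        = (1 / 4) * ϖ m v)
      ∧ (fderiv ℝ p₁ m v - 2 / (r ^ 3 - 1) * fderiv ℝ x₁ m v
            + (12 : ℝ) ^ ((1 : ℝ) / 3) * (r ^ 2 / (r ^ 3 - 1)) * fderiv ℝ y₁ m v
          = (1 / (2 * (r ^ 3 - 1))) * ω₂ r v)
      ∧ (fderiv ℝ q₁ m v + (12 : ℝ) ^ ((1 : ℝ) / 3) * (r ^ 2 / (r ^ 3 - 1)) * fderiv ℝ x₁ m v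
            + (12 : ℝ) ^ ((2 : ℝ) / 3) * (r * (r ^ 3 - 4) / (6 * (r ^ 3 - 1)))
              * fderiv ℝ y₁ m v
          = -((12 : ℝ) ^ ((1 : ℝ) / 3) * r ^ 2 / (4 * (r ^ 3 - 1))) * ω₂ r v
            - ((12 : ℝ) ^ ((1 : ℝ) / 3) / 6) * ω₃ r v)
      ∧ (fderiv ℝ y₁ m v
            - ((12 : ℝ) ^ ((2 : ℝ) / 3) * r / (2 * (r ^ 3 + 2))) * fderiv ℝ x₁ m v
          = ((12 : ℝ) ^ ((2 : ℝ) / 3) * r / (8 * (r ^ 3 + 2))) * ω₂ r v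
            + ((12 : ℝ) ^ ((2 : ℝ) / 3) * (r ^ 3 - 1) / (4 * (r ^ 3 + 2))) * ω₄ r v) := by
  intro m v
  have h1 : r ^ 3 - 1 ≠ 0 := sub_ne_zero.mpr hr1
  have h2 : r ^ 3 + 2 ≠ 0 := by intro h; exact hr2 (by linarith)
  have ha3 := cube_root_twelve_cube
  set a : ℝ := (12 : ℝ) ^ ((1 : ℝ) / 3) with ha
  rw [dx₁, dy₁, dz₁, dp₁, dq₁, twelve_two_thirds, ← ha]
  refine ⟨?_, ?_, ?_, ?_⟩
  · simp only [p₁, q₁, ϖ, ← ha]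
    linear_combination (-(m.2.2.2.2 * v.2.1) / 48) * ha3
  · simp only [ω₂]
    field_simp
    linear_combination (v.2.1 * (-8*r^2)) * ha3
  · simp only [ω₂, ω₃]
    field_simp
    linear_combination (a * v.2.1 * (16*r - 4*r^4)) * ha3
  · simp only [ω₂, ω₄]
    field_simp
    ring
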